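/- Let m, M, l, g > 0, set m̄ = m + M, let χ ∈ ℝ³ and let 𝕀 be a symmetric 3×3 real matrix. For R ∈ SO(3), y, ẏ ∈ ℝ³ and a 3×3 real matrix Ṙ, define Ω(R,Ṙ) = ((RᵀṘ)₃₂, (RᵀṘ)₁₃, (RᵀṘ)₂₁), K(Ω,v) = ½ Ω·𝕀Ω + m l v·(Ω×χ) + ½ m̄ ‖v‖², and the heavy-top Lagrangian L(R,y,Ṙ,ẏ) = K(Ω(R,Ṙ), Rᵀẏ) − m l g χ·(Rᵀe₃) − m̄ g y·e₃, where e₃ = (0,0,1). Then for R₀ ∈ SO(3) and y₀ ∈ ℝ³, the invariance L(R₀R, R₀y + y₀, R₀Ṙ, R₀ẏ) = L(R,y,Ṙ,ẏ) holds for ALL R ∈ SO(3), y, ẏ ∈ ℝ³ and 3×3 matrices Ṙ if and only if R₀ᵀe₃ = e₃ and y₀·e₃ = 0; i.e., the symmetry group of L consists exactly of the rotations about the vertical axis together with horizontal translations. -/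

import Mathlib

open Matrix

/-- Body angular velocity `Ω(R,Ṙ) = ((RᵀṘ)₃₂, (RᵀṘ)₁₃, (RᵀṘ)₂₁)`. -/
noncomputable def bodyAngVel (R Rdot : Matrix (Fin 3) (Fin 3) ℝ) : Fin 3 → ℝ :=
  ![(Rᵀ * Rdot) 2 1, (Rᵀ * Rdot) 0 2, (Rᵀ * Rdot) 1 0]

/-- Kinetic energy `K(Ω,v) = ½ Ω·𝕀Ω + m l v·(Ω×χ) + ½ m̄ ‖v‖²`. -/
noncomputable def kinEnergy (m M l : ℝ) (χ : Fin 3 → ℝ) (I : Matrix (Fin 3) (Fin 3) ℝ)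
    (Ω v : Fin 3 → ℝ) : ℝ :=
  (1 / 2) * (Ω ⬝ᵥ I *ᵥ Ω) + m * l * (v ⬝ᵥ crossProduct Ω χ) + (1 / 2) * (m + M) * (v ⬝ᵥ v)

/-- The heavy-top Lagrangian
`L(R,y,Ṙ,ẏ) = K(Ω(R,Ṙ), Rᵀẏ) − m l g χ·(Rᵀe₃) − m̄ g y·e₃`. -/
noncomputable def heavyTopL (m M l g : ℝ) (χ : Fin 3 → ℝ) (I : Matrix (Fin 3) (Fin 3) ℝ)
    (R : Matrix (Fin 3) (Fin 3) ℝ) (y : Fin 3 → ℝ) (Rdot : Matrix (Fin 3) (Fin 3) ℝ)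
    (ydot : Fin 3 → ℝ) : ℝ :=
  kinEnergy m M l χ I (bodyAngVel R Rdot) (Rᵀ *ᵥ ydot)
    - m * l * g * (χ ⬝ᵥ Rᵀ *ᵥ ![(0 : ℝ), 0, 1]) - (m + M) * g * (y ⬝ᵥ ![(0 : ℝ), 0, 1])

/-- The symmetry group of the heavy-top Lagrangian consists exactly of the rotations
about the vertical axis together with the horizontal translations:
`(R₀,y₀) ∈ SE(3)` leaves `L` invariant iff `R₀ᵀe₃ = e₃` and `y₀·e₃ = 0`. -/
theorem heavyTopL_invariant_iff (m M l g : ℝ) (hm : 0 < m) (hM : 0 < M) (hl : 0 < l)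
    (hg : 0 < g) (χ : Fin 3 → ℝ) (I : Matrix (Fin 3) (Fin 3) ℝ) (hI : Iᵀ = I)
    (R₀ : Matrix (Fin 3) (Fin 3) ℝ) (hR₀ : R₀ᵀ * R₀ = 1) (hR₀det : R₀.det = 1)
    (y₀ : Fin 3 → ℝ) :
    (∀ (R : Matrix (Fin 3) (Fin 3) ℝ), Rᵀ * R = 1 → R.det = 1 →
      ∀ (y : Fin 3 → ℝ) (Rdot : Matrix (Fin 3) (Fin 3) ℝ) (ydot : Fin 3 → ℝ),
        heavyTopL m M l g χ I (R₀ * R) (R₀ *ᵥ y + y₀) (R₀ * Rdot) (R₀ *ᵥ ydot)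
          = heavyTopL m M l g χ I R y Rdot ydot)
    ↔ (R₀ᵀ *ᵥ ![(0 : ℝ), 0, 1] = ![(0 : ℝ), 0, 1] ∧ y₀ ⬝ᵥ ![(0 : ℝ), 0, 1] = 0) := by

  constructor
  · intro h
    have h0 := h 1 (by simp) (by simp) 0 0 0
    have h1 := h 1 (by simp) (by simp) ![1, 0, 0] 0 0
    have h2 := h 1 (by simp) (by simp) ![0, 1, 0] 0 0
    have h3 := h 1 (by simp) (by simp) ![0, 0, 1] 0 0
    simp [heavyTopL, kinEnergy, bodyAngVel, Matrix.mulVec, dotProduct,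
      Fin.sum_univ_three, crossProduct, Matrix.mul_apply] at h0 h1 h2 h3
    have hmg : ((m + M) * g : ℝ) ≠ 0 := by positivity
    have hr0 : R₀ 2 0 = 0 := by
      have e : (m + M) * g * R₀ 2 0 = 0 := by linear_combination h0 - h1
      exact (mul_eq_zero.mp e).resolve_left hmg
    have hr1 : R₀ 2 1 = 0 := by
      have e : (m + M) * g * R₀ 2 1 = 0 := by linear_combination h0 - h2
      exact (mul_eq_zero.mp e).resolve_left hmg
    have hr2 : R₀ 2 2 = 1 := by
      have e : (m + M) * g * (R₀ 2 2 - 1) = 0 := by linear_combination h0 - h3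
      have := (mul_eq_zero.mp e).resolve_left hmg
      linarith
    have hy : y₀ 2 = 0 := by
      rw [hr0, hr1, hr2] at h0
      have e : (m + M) * g * y₀ 2 = 0 := by linear_combination -h0
      exact (mul_eq_zero.mp e).resolve_left hmg
    constructor
    · funext i
      fin_cases i <;>
        simp [Matrix.mulVec, dotProduct, Fin.sum_univ_three, hr0, hr1, hr2]
    · simp [dotProduct, Fin.sum_univ_three, hy]
  · rintro ⟨h1, h2⟩ R hR hdet y Rdot ydot
    have kmat : ∀ S : Matrix (Fin 3) (Fin 3) ℝ, (R₀ * R)ᵀ * (R₀ * S) = Rᵀ * S := by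
      intro S
      rw [transpose_mul, Matrix.mul_assoc, ← Matrix.mul_assoc R₀ᵀ, hR₀, Matrix.one_mul]
    have kvec : ∀ v : Fin 3 → ℝ, (R₀ * R)ᵀ *ᵥ (R₀ *ᵥ v) = Rᵀ *ᵥ v := by
      intro v
      rw [Matrix.mulVec_mulVec, transpose_mul, Matrix.mul_assoc, hR₀, Matrix.mul_one]
    have hΩ : bodyAngVel (R₀ * R) (R₀ * Rdot) = bodyAngVel R Rdot := by
      unfold bodyAngVel; rw [kmat]
    have hχ : χ ⬝ᵥ (R₀ * R)ᵀ *ᵥ ![(0 : ℝ), 0, 1] = χ ⬝ᵥ Rᵀ *ᵥ ![(0 : ℝ), 0, 1] := by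
      rw [transpose_mul, ← Matrix.mulVec_mulVec, h1]
    have hy : (R₀ *ᵥ y + y₀) ⬝ᵥ ![(0 : ℝ), 0, 1] = y ⬝ᵥ ![(0 : ℝ), 0, 1] := by
      rw [add_dotProduct, h2, add_zero,
        show (R₀ *ᵥ y) ⬝ᵥ ![(0 : ℝ), 0, 1] = y ⬝ᵥ (R₀ᵀ *ᵥ ![(0 : ℝ), 0, 1]) by
          rw [Matrix.mulVec_transpose, dotProduct_comm, dotProduct_mulVec, dotProduct_comm],
        h1]
    unfold heavyTopL
    rw [hΩ, kvec, hχ, hy]
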